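/- arXiv:2010.16250 — 5 statements merged into one kernel-verified Lean document; each statement's English description precedes it below -/
import Mathlib

section
/- Let f : {1,...,N}^d → ℝ satisfy discrete midpoint convexity, i.e., f(x) + f(y) ≥ f(⌈(x+y)/2⌉) + f(⌊(x+y)/2⌋) for all x, y in the domain, where the ceiling and floor are taken componentwise. If x ∈ {1,...,N}^d satisfies f(x) ≤ f(y) for every y ∈ {1,...,N}^d with ‖y − x‖_∞ ≤ 1, then f(x) ≤ f(y) for every y ∈ {1,...,N}^d. -/
/-- For an L♮-convex (discretely midpoint convex) function on the lattice
cube `{1,...,N}^d`, local optimality in the `ℓ∞`-ball of radius 1 implies global optimality. -/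
theorem discrete_local_min_is_global_min
    (d N : ℕ) (hd : 1 ≤ d) (hN : 2 ≤ N)
    (f : (Fin d → ℤ) → ℝ)
    (hmid : ∀ x y : Fin d → ℤ,
      (∀ i, 1 ≤ x i ∧ x i ≤ (N : ℤ)) → (∀ i, 1 ≤ y i ∧ y i ≤ (N : ℤ)) →
      f (fun i => (x i + y i + 1) / 2) + f (fun i => (x i + y i) / 2) ≤ f x + f y)
    (x : Fin d → ℤ) (hx : ∀ i, 1 ≤ x i ∧ x i ≤ (N : ℤ))
    (hloc : ∀ y : Fin d → ℤ, (∀ i, 1 ≤ y i ∧ y i ≤ (N : ℤ)) →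
      (∀ i, |y i - x i| ≤ 1) → f x ≤ f y) :
    ∀ y : Fin d → ℤ, (∀ i, 1 ≤ y i ∧ y i ≤ (N : ℤ)) → f x ≤ f y := by
  have key : ∀ k : ℕ, ∀ y : Fin d → ℤ, (∀ i, 1 ≤ y i ∧ y i ≤ (N : ℤ)) →
      (∀ i, |y i - x i| ≤ (k : ℤ)) → f x ≤ f y := by
    intro k
    induction k using Nat.strong_induction_on with
    | _ k ih =>
      intro y hy hdist
      by_cases hk : k ≤ 1
      · refine hloc y hy fun i => (hdist i).trans ?_
        exact_mod_cast hk
      · push_neg at hk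
        have hdist' : ∀ i, |y i - x i| ≤ (k : ℤ) ∧ 2 ≤ k := fun i => ⟨hdist i, hk⟩
        have hm1dom : ∀ i, 1 ≤ (x i + y i + 1) / 2 ∧ (x i + y i + 1) / 2 ≤ (N : ℤ) := by
          intro i; have h1 := hx i; have h2 := hy i; omega
        have hm2dom : ∀ i, 1 ≤ (x i + y i) / 2 ∧ (x i + y i) / 2 ≤ (N : ℤ) := by
          intro i; have h1 := hx i; have h2 := hy i; omega
        have hd1 : ∀ i, |(x i + y i + 1) / 2 - x i| ≤ ((k - 1 : ℕ) : ℤ) := by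
          intro i
          have h := hdist i
          rw [abs_le] at h ⊢
          omega
        have hd2 : ∀ i, |(x i + y i) / 2 - x i| ≤ ((k - 1 : ℕ) : ℤ) := by
          intro i
          have h := hdist i
          rw [abs_le] at h ⊢
          omega
        have h1 := ih (k - 1) (by omega) (fun i => (x i + y i + 1) / 2) hm1dom hd1
        have h2 := ih (k - 1) (by omega) (fun i => (x i + y i) / 2) hm2dom hd2
        have h3 := hmid x y hx hy
        linarith
  intro y hy
  refine key N y hy fun i => ?_
  have h1 := hx i; have h2 := hy i
  rw [abs_le]; omega
end

section
/- Let f : {1,...,N}^d → ℤ (or ℝ) be L♮-convex, i.e., satisfy f(x)+f(y) ≥ f(⌈(x+y)/2⌉)+f(⌊(x+y)/2⌋) for all x,y. Then f satisfies translation submodularity: for all x, y in the domain and all natural numbers α such that (x − α·1) ∨ y and x ∧ (y + α·1) remain in the domain, one has f(x) + f(y) ≥ f((x − α·1) ∨ y) + f(x ∧ (y + α·1)). -/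
/-- Submodularity (the case `α = 0`) from discrete midpoint convexity. -/
private lemma lnat_sub0 (d N : ℕ) (f : (Fin d → ℤ) → ℝ)
    (hmid : ∀ x y : Fin d → ℤ,
      (∀ i, 1 ≤ x i ∧ x i ≤ (N : ℤ)) → (∀ i, 1 ≤ y i ∧ y i ≤ (N : ℤ)) →
      f (fun i => (x i + y i + 1) / 2) + f (fun i => (x i + y i) / 2) ≤ f x + f y) :
    ∀ x y : Fin d → ℤ,
      (∀ i, 1 ≤ x i ∧ x i ≤ (N : ℤ)) → (∀ i, 1 ≤ y i ∧ y i ≤ (N : ℤ)) →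
      f (fun i => max (x i) (y i)) + f (fun i => min (x i) (y i)) ≤ f x + f y := by
  suffices H : ∀ n : ℕ, ∀ x y : Fin d → ℤ,
      (∀ i, 1 ≤ x i ∧ x i ≤ (N : ℤ)) → (∀ i, 1 ≤ y i ∧ y i ≤ (N : ℤ)) →
      (∑ i, (x i - y i).natAbs) < n →
      f (fun i => max (x i) (y i)) + f (fun i => min (x i) (y i)) ≤ f x + f y by
    intro x y hx hy
    exact H ((∑ i, (x i - y i).natAbs) + 1) x y hx hy (Nat.lt_succ_self _)
  intro n
  induction n with
  | zero => intro x y _ _ h; exact absurd h (Nat.not_lt_zero _)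
  | succ n IH =>
    intro x y hx hy hW
    by_cases hb : ∀ i, (x i - y i).natAbs ≤ 1
    · have e1 : (fun i => max (x i) (y i)) = (fun i => (x i + y i + 1) / 2) := by
        funext i; have := hb i; omega
      have e2 : (fun i => min (x i) (y i)) = (fun i => (x i + y i) / 2) := by
        funext i; have := hb i; omega
      rw [e1, e2]; exact hmid x y hx hy
    · push_neg at hb
      obtain ⟨j, hj⟩ := hb
      set u : Fin d → ℤ := fun i => (x i + y i + 1) / 2 with hu
      have hub : ∀ i, 1 ≤ u i ∧ u i ≤ (N : ℤ) := by
        intro i; have h1 := hx i; have h2 := hy i; simp only [hu]; omega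
      have key : ∀ z w : Fin d → ℤ, (∀ i, (z i - w i).natAbs ≤ (x i - y i).natAbs) →
          ((z j - w j).natAbs < (x j - y j).natAbs) → (∑ i, (z i - w i).natAbs) < n := by
        intro z w hle hlt
        have : (∑ i, (z i - w i).natAbs) < ∑ i, (x i - y i).natAbs :=
          Finset.sum_lt_sum (fun i _ => hle i) ⟨j, Finset.mem_univ j, hlt⟩
        omega
      set r1 : Fin d → ℤ := fun i => max (x i) (u i) with hr1
      set s1 : Fin d → ℤ := fun i => min (x i) (u i) with hs1
      set r2 : Fin d → ℤ := fun i => max (y i) (u i) with hr2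
      set s2 : Fin d → ℤ := fun i => min (y i) (u i) with hs2
      have hr1b : ∀ i, 1 ≤ r1 i ∧ r1 i ≤ (N : ℤ) := by
        intro i; have h1 := hx i; have h2 := hub i; simp only [hr1]; omega
      have hs1b : ∀ i, 1 ≤ s1 i ∧ s1 i ≤ (N : ℤ) := by
        intro i; have h1 := hx i; have h2 := hub i; simp only [hs1]; omega
      have hr2b : ∀ i, 1 ≤ r2 i ∧ r2 i ≤ (N : ℤ) := by
        intro i; have h1 := hy i; have h2 := hub i; simp only [hr2]; omega
      have hs2b : ∀ i, 1 ≤ s2 i ∧ s2 i ≤ (N : ℤ) := by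
        intro i; have h1 := hy i; have h2 := hub i; simp only [hs2]; omega
      have h1 : f (fun i => max (x i) (u i)) + f (fun i => min (x i) (u i)) ≤ f x + f u :=
        IH x u hx hub (key x u (fun i => by simp only [hu]; omega)
          (by simp only [hu]; omega))
      have h2 : f (fun i => max (y i) (u i)) + f (fun i => min (y i) (u i)) ≤ f y + f u :=
        IH y u hy hub (key y u (fun i => by simp only [hu]; omega)
          (by simp only [hu]; omega))
      have h3 : f (fun i => max (r1 i) (r2 i)) + f (fun i => min (r1 i) (r2 i))
          ≤ f r1 + f r2 :=
        IH r1 r2 hr1b hr2b (key r1 r2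
          (fun i => by simp only [hr1, hr2, hu]; omega)
          (by simp only [hr1, hr2, hu]; omega))
      have h4 : f (fun i => max (s1 i) (s2 i)) + f (fun i => min (s1 i) (s2 i))
          ≤ f s1 + f s2 :=
        IH s1 s2 hs1b hs2b (key s1 s2
          (fun i => by simp only [hs1, hs2, hu]; omega)
          (by simp only [hs1, hs2, hu]; omega))
      have e3 : (fun i => max (r1 i) (r2 i)) = (fun i => max (x i) (y i)) := by
        funext i; simp only [hr1, hr2, hu]; omega
      have e3' : (fun i => min (r1 i) (r2 i)) = u := by
        funext i; simp only [hr1, hr2, hu]; omega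
      have e4 : (fun i => max (s1 i) (s2 i)) = u := by
        funext i; simp only [hs1, hs2, hu]; omega
      have e4' : (fun i => min (s1 i) (s2 i)) = (fun i => min (x i) (y i)) := by
        funext i; simp only [hs1, hs2, hu]; omega
      rw [e3, e3'] at h3
      rw [e4, e4'] at h4
      linarith

/-- The case `α = 1` from discrete midpoint convexity and submodularity. -/
private lemma lnat_one (d N : ℕ) (f : (Fin d → ℤ) → ℝ)
    (hmid : ∀ x y : Fin d → ℤ,
      (∀ i, 1 ≤ x i ∧ x i ≤ (N : ℤ)) → (∀ i, 1 ≤ y i ∧ y i ≤ (N : ℤ)) →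
      f (fun i => (x i + y i + 1) / 2) + f (fun i => (x i + y i) / 2) ≤ f x + f y) :
    ∀ x y : Fin d → ℤ,
      (∀ i, 1 ≤ x i ∧ x i ≤ (N : ℤ)) → (∀ i, 1 ≤ y i ∧ y i ≤ (N : ℤ)) →
      f (fun i => max (x i - 1) (y i)) + f (fun i => min (x i) (y i + 1)) ≤ f x + f y := by
  have sub0 := lnat_sub0 d N f hmid
  suffices H : ∀ n : ℕ, ∀ x y : Fin d → ℤ,
      (∀ i, 1 ≤ x i ∧ x i ≤ (N : ℤ)) → (∀ i, 1 ≤ y i ∧ y i ≤ (N : ℤ)) →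
      (∑ i, (x i - y i).natAbs) < n →
      f (fun i => max (x i - 1) (y i)) + f (fun i => min (x i) (y i + 1)) ≤ f x + f y by
    intro x y hx hy
    exact H ((∑ i, (x i - y i).natAbs) + 1) x y hx hy (Nat.lt_succ_self _)
  intro n
  induction n with
  | zero => intro x y _ _ h; exact absurd h (Nat.not_lt_zero _)
  | succ n IH =>
    intro x y hx hy hW
    by_cases hb : ∀ i, (x i - y i).natAbs ≤ 1
    · have e1 : (fun i => max (x i - 1) (y i)) = y := by
        funext i; have := hb i; omega
      have e2 : (fun i => min (x i) (y i + 1)) = x := by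
        funext i; have := hb i; omega
      rw [e1, e2]; linarith
    · push_neg at hb
      obtain ⟨j, hj⟩ := hb
      set u : Fin d → ℤ := fun i => (x i + y i + 1) / 2 with hu
      set v : Fin d → ℤ := fun i => (x i + y i) / 2 with hv
      have hub : ∀ i, 1 ≤ u i ∧ u i ≤ (N : ℤ) := by
        intro i; have h1 := hx i; have h2 := hy i; simp only [hu]; omega
      have hvb : ∀ i, 1 ≤ v i ∧ v i ≤ (N : ℤ) := by
        intro i; have h1 := hx i; have h2 := hy i; simp only [hv]; omega
      have key : ∀ z w : Fin d → ℤ, (∀ i, (z i - w i).natAbs ≤ (x i - y i).natAbs) →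
          ((z j - w j).natAbs < (x j - y j).natAbs) → (∑ i, (z i - w i).natAbs) < n := by
        intro z w hle hlt
        have : (∑ i, (z i - w i).natAbs) < ∑ i, (x i - y i).natAbs :=
          Finset.sum_lt_sum (fun i _ => hle i) ⟨j, Finset.mem_univ j, hlt⟩
        omega
      set p1 : Fin d → ℤ := fun i => max (x i - 1) (v i) with hp1
      set q1 : Fin d → ℤ := fun i => min (x i) (v i + 1) with hq1
      set p2 : Fin d → ℤ := fun i => max (u i - 1) (y i) with hp2
      set q2 : Fin d → ℤ := fun i => min (u i) (y i + 1) with hq2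
      have hp1b : ∀ i, 1 ≤ p1 i ∧ p1 i ≤ (N : ℤ) := by
        intro i; have h1 := hx i; have h2 := hvb i; simp only [hp1]; omega
      have hq1b : ∀ i, 1 ≤ q1 i ∧ q1 i ≤ (N : ℤ) := by
        intro i; have h1 := hx i; have h2 := hvb i; have h3 := hy i
        simp only [hq1, hv]; omega
      have hp2b : ∀ i, 1 ≤ p2 i ∧ p2 i ≤ (N : ℤ) := by
        intro i; have h1 := hy i; have h2 := hub i; have h3 := hx i
        simp only [hp2, hu]; omega
      have hq2b : ∀ i, 1 ≤ q2 i ∧ q2 i ≤ (N : ℤ) := by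
        intro i; have h1 := hy i; have h2 := hub i; simp only [hq2]; omega
      -- IH on (x, v) and (u, y)
      have h1 : f (fun i => max (x i - 1) (v i)) + f (fun i => min (x i) (v i + 1))
          ≤ f x + f v :=
        IH x v hx hvb (key x v (fun i => by simp only [hv]; omega)
          (by simp only [hv]; omega))
      have h2 : f (fun i => max (u i - 1) (y i)) + f (fun i => min (u i) (y i + 1))
          ≤ f u + f y :=
        IH u y hub hy (key u y (fun i => by simp only [hu]; omega)
          (by simp only [hu]; omega))
      -- submodularity merges
      have h3 : f (fun i => max (p1 i) (p2 i)) + f (fun i => min (p1 i) (p2 i))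
          ≤ f p1 + f p2 := sub0 p1 p2 hp1b hp2b
      have h4 : f (fun i => max (q1 i) (q2 i)) + f (fun i => min (q1 i) (q2 i))
          ≤ f q1 + f q2 := sub0 q1 q2 hq1b hq2b
      set w1 : Fin d → ℤ := fun i => min (p1 i) (p2 i) with hw1
      set w2 : Fin d → ℤ := fun i => max (q1 i) (q2 i) with hw2
      have hw1b : ∀ i, 1 ≤ w1 i ∧ w1 i ≤ (N : ℤ) := by
        intro i; have h5 := hp1b i; have h6 := hp2b i; simp only [hw1]; omega
      have hw2b : ∀ i, 1 ≤ w2 i ∧ w2 i ≤ (N : ℤ) := by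
        intro i; have h5 := hq1b i; have h6 := hq2b i; simp only [hw2]; omega
      -- midpoint cancellation
      have h5 : f (fun i => (w2 i + w1 i + 1) / 2) + f (fun i => (w2 i + w1 i) / 2)
          ≤ f w2 + f w1 := hmid w2 w1 hw2b hw1b
      have e3 : (fun i => max (p1 i) (p2 i)) = (fun i => max (x i - 1) (y i)) := by
        funext i; simp only [hp1, hp2, hu, hv]; omega
      have e4 : (fun i => min (q1 i) (q2 i)) = (fun i => min (x i) (y i + 1)) := by
        funext i; simp only [hq1, hq2, hu, hv]; omega
      have e5 : (fun i => (w2 i + w1 i + 1) / 2) = u := by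
        funext i; simp only [hw1, hw2, hp1, hp2, hq1, hq2, hu, hv]; omega
      have e5' : (fun i => (w2 i + w1 i) / 2) = v := by
        funext i; simp only [hw1, hw2, hp1, hp2, hq1, hq2, hu, hv]; omega
      rw [e3] at h3
      rw [e4] at h4
      rw [e5, e5'] at h5
      linarith

/-- Translation submodularity for every `α`, by induction on `α`. -/
private lemma lnat_key (d N : ℕ) (f : (Fin d → ℤ) → ℝ)
    (hmid : ∀ x y : Fin d → ℤ,
      (∀ i, 1 ≤ x i ∧ x i ≤ (N : ℤ)) → (∀ i, 1 ≤ y i ∧ y i ≤ (N : ℤ)) →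
      f (fun i => (x i + y i + 1) / 2) + f (fun i => (x i + y i) / 2) ≤ f x + f y) :
    ∀ α : ℕ, ∀ x y : Fin d → ℤ,
      (∀ i, 1 ≤ x i ∧ x i ≤ (N : ℤ)) → (∀ i, 1 ≤ y i ∧ y i ≤ (N : ℤ)) →
      f (fun i => max (x i - (α : ℤ)) (y i)) + f (fun i => min (x i) (y i + (α : ℤ)))
        ≤ f x + f y := by
  intro α
  induction α using Nat.twoStepInduction with
  | zero =>
    intro x y hx hy
    have e1 : (fun i => max (x i - ((0 : ℕ) : ℤ)) (y i)) = (fun i => max (x i) (y i)) := by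
      funext i; omega
    have e2 : (fun i => min (x i) (y i + ((0 : ℕ) : ℤ))) = (fun i => min (x i) (y i)) := by
      funext i; omega
    rw [e1, e2]
    exact lnat_sub0 d N f hmid x y hx hy
  | one =>
    intro x y hx hy
    have e1 : (fun i => max (x i - ((1 : ℕ) : ℤ)) (y i)) = (fun i => max (x i - 1) (y i)) := by
      funext i; omega
    have e2 : (fun i => min (x i) (y i + ((1 : ℕ) : ℤ))) = (fun i => min (x i) (y i + 1)) := by
      funext i; omega
    rw [e1, e2]
    exact lnat_one d N f hmid x y hx hy
  | more n _ IH2 =>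
    intro x y hx hy
    -- the cyclic three-instance scheme, with α = n + 2
    set A : Fin d → ℤ :=
      fun i => max (max (y i) (x i - 1)) (min (x i) (y i + ((n : ℤ) + 2) / 2)) with hA
    set B : Fin d → ℤ :=
      fun i => max (min (x i - 1) (y i + (n : ℤ) + 1)) (min (x i) (y i)) with hB
    set mp : Fin d → ℤ := fun i => min (A i) (y i + (n : ℤ) + 1) with hmp
    set mq : Fin d → ℤ := fun i => max (x i - 1) (B i) with hmq
    have hAb : ∀ i, 1 ≤ A i ∧ A i ≤ (N : ℤ) := by
      intro i; have h1 := hx i; have h2 := hy i; simp only [hA]; omega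
    have hBb : ∀ i, 1 ≤ B i ∧ B i ≤ (N : ℤ) := by
      intro i; have h1 := hx i; have h2 := hy i; simp only [hB]; omega
    have hmpb : ∀ i, 1 ≤ mp i ∧ mp i ≤ (N : ℤ) := by
      intro i; have h1 := hAb i; have h2 := hy i; simp only [hmp]; omega
    have hmqb : ∀ i, 1 ≤ mq i ∧ mq i ≤ (N : ℤ) := by
      intro i; have h1 := hx i; have h2 := hBb i; simp only [hmq]; omega
    -- instance 1: IH at α = n+1 applied to the pair (A, y)
    have hp : f (fun i => max (A i - ((n + 1 : ℕ) : ℤ)) (y i))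
        + f (fun i => min (A i) (y i + ((n + 1 : ℕ) : ℤ))) ≤ f A + f y :=
      IH2 A y hAb hy
    -- instance 2: the case α = 1 applied to the pair (x, B)
    have hq : f (fun i => max (x i - 1) (B i)) + f (fun i => min (x i) (B i + 1))
        ≤ f x + f B := lnat_one d N f hmid x B hx hBb
    -- instance 3: submodularity applied to the pair (mq, mp)
    have h0 : f (fun i => max (mq i) (mp i)) + f (fun i => min (mq i) (mp i))
        ≤ f mq + f mp := lnat_sub0 d N f hmid mq mp hmqb hmpb
    -- rewriting all the points
    have e1 : (fun i => max (A i - ((n + 1 : ℕ) : ℤ)) (y i))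
        = (fun i => max (x i - ((n + 2 : ℕ) : ℤ)) (y i)) := by
      funext i; simp only [hA]; push_cast; omega
    have e2 : (fun i => min (A i) (y i + ((n + 1 : ℕ) : ℤ))) = mp := by
      funext i; simp only [hmp]; push_cast; omega
    have e3 : (fun i => max (x i - 1) (B i)) = mq := by
      funext i; simp only [hmq]
    have e4 : (fun i => min (x i) (B i + 1))
        = (fun i => min (x i) (y i + ((n + 2 : ℕ) : ℤ))) := by
      funext i; simp only [hB]; push_cast; omega
    have e5 : (fun i => max (mq i) (mp i)) = A := by
      funext i; simp only [hmq, hmp, hA, hB]; omega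
    have e6 : (fun i => min (mq i) (mp i)) = B := by
      funext i; simp only [hmq, hmp, hA, hB]; omega
    rw [e1, e2] at hp
    rw [e3, e4] at hq
    rw [e5, e6] at h0
    linarith

/-- An L♮-convex function (discrete midpoint convexity) on `{1,...,N}^d`
satisfies translation submodularity. -/
theorem lnat_convex_translation_submodular
    (d N : ℕ) (f : (Fin d → ℤ) → ℝ)
    (hmid : ∀ x y : Fin d → ℤ,
      (∀ i, 1 ≤ x i ∧ x i ≤ (N : ℤ)) → (∀ i, 1 ≤ y i ∧ y i ≤ (N : ℤ)) →
      f (fun i => (x i + y i + 1) / 2) + f (fun i => (x i + y i) / 2) ≤ f x + f y) :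
    ∀ x y : Fin d → ℤ,
      (∀ i, 1 ≤ x i ∧ x i ≤ (N : ℤ)) → (∀ i, 1 ≤ y i ∧ y i ≤ (N : ℤ)) →
      ∀ α : ℕ,
        (∀ i, 1 ≤ max (x i - (α : ℤ)) (y i) ∧ max (x i - (α : ℤ)) (y i) ≤ (N : ℤ)) →
        (∀ i, 1 ≤ min (x i) (y i + (α : ℤ)) ∧ min (x i) (y i + (α : ℤ)) ≤ (N : ℤ)) →
        f (fun i => max (x i - (α : ℤ)) (y i)) + f (fun i => min (x i) (y i + (α : ℤ)))
          ≤ f x + f y := by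
  intro x y hx hy α _ _
  exact lnat_key d N f hmid α x y hx hy
end

section
/- Let f : {1,...,N}^d → ℝ satisfy translation submodularity: f(x) + f(y) ≥ f((x − α·1) ∨ y) + f(x ∧ (y + α·1)) whenever both resulting points lie in the domain. Fix x in the domain, a constant a ∈ [0,1), and a constant b ≥ 0. Suppose that for every point of the form x + e_S or x − e_S (with S ⊆ [d], where e_S := Σ_{i∈S} e_i) lying in the domain, we have f at that point minus f(x) ≥ −b/(1−a). Then for every y in the domain with ‖y − x‖_∞ ≤ 1 one has f(y) ≥ f(x) − 2b/(1−a). -/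
/-- Let `f` on `{1,...,N}^d` satisfy translation submodularity. If at `x`
every feasible move of the form `x + e_S` or `x − e_S` (indicator step over a set `S` of
coordinates) decreases `f` by at most `b/(1−a)`, then every feasible `y` with
`‖y − x‖_∞ ≤ 1` satisfies `f(y) ≥ f(x) − 2b/(1−a)`. -/
theorem neighborhood_lower_bound
    (d N : ℕ) (f : (Fin d → ℤ) → ℝ)
    (htsub : ∀ x y : Fin d → ℤ,
      (∀ i, 1 ≤ x i ∧ x i ≤ (N : ℤ)) → (∀ i, 1 ≤ y i ∧ y i ≤ (N : ℤ)) →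
      ∀ α : ℕ,
        (∀ i, 1 ≤ max (x i - (α : ℤ)) (y i) ∧ max (x i - (α : ℤ)) (y i) ≤ (N : ℤ)) →
        (∀ i, 1 ≤ min (x i) (y i + (α : ℤ)) ∧ min (x i) (y i + (α : ℤ)) ≤ (N : ℤ)) →
        f (fun i => max (x i - (α : ℤ)) (y i)) + f (fun i => min (x i) (y i + (α : ℤ)))
          ≤ f x + f y)
    (x : Fin d → ℤ) (hx : ∀ i, 1 ≤ x i ∧ x i ≤ (N : ℤ))
    (a b : ℝ) (ha0 : 0 ≤ a) (ha1 : a < 1) (hb : 0 ≤ b)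
    (hup : ∀ S : Finset (Fin d),
      (∀ i, 1 ≤ x i + (if i ∈ S then 1 else 0) ∧ x i + (if i ∈ S then 1 else 0) ≤ (N : ℤ)) →
      -(b / (1 - a)) ≤ f (fun i => x i + (if i ∈ S then 1 else 0)) - f x)
    (hdown : ∀ S : Finset (Fin d),
      (∀ i, 1 ≤ x i - (if i ∈ S then 1 else 0) ∧ x i - (if i ∈ S then 1 else 0) ≤ (N : ℤ)) →
      -(b / (1 - a)) ≤ f (fun i => x i - (if i ∈ S then 1 else 0)) - f x) :
    ∀ y : Fin d → ℤ, (∀ i, 1 ≤ y i ∧ y i ≤ (N : ℤ)) → (∀ i, |y i - x i| ≤ 1) →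
      f x - 2 * b / (1 - a) ≤ f y := by
  intro y hy hnear
  set S1 : Finset (Fin d) := Finset.univ.filter (fun i => y i = x i + 1) with hS1
  set S2 : Finset (Fin d) := Finset.univ.filter (fun i => y i = x i - 1) with hS2
  have habs : ∀ i, y i = x i + 1 ∨ y i = x i ∨ y i = x i - 1 := by
    intro i; have := abs_le.mp (hnear i); omega
  have hmax : ∀ i, max (x i - (0:ℤ)) (y i) = x i + (if i ∈ S1 then 1 else 0) := by
    intro i
    simp only [hS1, Finset.mem_filter, Finset.mem_univ, true_and]
    rcases habs i with h | h | h <;> simp [h] <;> omega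
  have hmin : ∀ i, min (x i) (y i + (0:ℤ)) = x i - (if i ∈ S2 then 1 else 0) := by
    intro i
    simp only [hS2, Finset.mem_filter, Finset.mem_univ, true_and]
    rcases habs i with h | h | h <;> simp [h] <;> omega
  have hmaxdom : ∀ i, 1 ≤ max (x i - (0:ℤ)) (y i) ∧ max (x i - (0:ℤ)) (y i) ≤ (N : ℤ) := by
    intro i; have h1 := hx i; have h2 := hy i
    constructor
    · exact le_max_of_le_left (by omega)
    · exact max_le (by omega) h2.2
  have hmindom : ∀ i, 1 ≤ min (x i) (y i + (0:ℤ)) ∧ min (x i) (y i + (0:ℤ)) ≤ (N : ℤ) := by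
    intro i; have h1 := hx i; have h2 := hy i
    constructor
    · exact le_min h1.1 (by omega)
    · exact min_le_of_left_le h1.2
  have hsub := htsub x y hx hy 0 hmaxdom hmindom
  have hu := hup S1 (by intro i; rw [← hmax i]; exact hmaxdom i)
  have hd := hdown S2 (by intro i; rw [← hmin i]; exact hmindom i)
  have e1 : (fun i => max (x i - (0:ℤ)) (y i)) = fun i => x i + (if i ∈ S1 then 1 else 0) :=
    funext hmax
  have e2 : (fun i => min (x i) (y i + (0:ℤ))) = fun i => x i - (if i ∈ S2 then 1 else 0) :=
    funext hmin
  simp only [Nat.cast_zero] at hsub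
  rw [e1, e2] at hsub
  have : 2 * b / (1 - a) = b / (1 - a) + b / (1 - a) := by ring
  linarith
end

section
/- Let f̃ : [1,N]^d → ℝ be the convex extension of an L♮-convex function f on {1,...,N}^d, and suppose f has a unique minimizer x* with f(x) − f(x*) ≥ c for all lattice points x ≠ x* (indifference zone parameter c > 0). If f̃(x̄) − f(x*) ≤ ε for some x̄ ∈ [1,N]^d with ε < c·N, then ‖x̄ − x*‖_∞ ≤ ε/c. In particular, running with target accuracy ε_e = c·N·2^{−e−2} guarantees x* lies in the ℓ∞-ball of radius 2^{−e−2}N around the epoch-e iterate. -/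
/-- Growth lemma: discrete midpoint convexity plus indifference zone implies
`c * |z i - xs i| ≤ f z - f xs` for all lattice points `z` in the box. -/
theorem iz_growth
    (d N : ℕ)
    (f : (Fin d → ℤ) → ℝ)
    (hmid : ∀ x y : Fin d → ℤ,
      (∀ i, 1 ≤ x i ∧ x i ≤ (N : ℤ)) → (∀ i, 1 ≤ y i ∧ y i ≤ (N : ℤ)) →
      f (fun i => (x i + y i + 1) / 2) + f (fun i => (x i + y i) / 2) ≤ f x + f y)
    (xs : Fin d → ℤ) (hxs : ∀ i, 1 ≤ xs i ∧ xs i ≤ (N : ℤ))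
    (c : ℝ) (hc : 0 < c)
    (hIZ : ∀ z : Fin d → ℤ, (∀ i, 1 ≤ z i ∧ z i ≤ (N : ℤ)) → z ≠ xs → c ≤ f z - f xs) :
    ∀ k : ℕ, ∀ z : Fin d → ℤ, (∀ i, 1 ≤ z i ∧ z i ≤ (N : ℤ)) →
      (∀ i, (z i - xs i).natAbs ≤ k) → ∀ i,
      c * (((z i - xs i).natAbs : ℕ) : ℝ) ≤ f z - f xs := by
  intro k
  induction k using Nat.strong_induction_on with
  | _ k IH =>
    intro z hz hbd i
    by_cases h1 : (z i - xs i).natAbs ≤ 1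
    · by_cases hzx : z = xs
      · subst hzx; simp
      · have hcz := hIZ z hz hzx
        have ht : (((z i - xs i).natAbs : ℕ) : ℝ) ≤ 1 := by exact_mod_cast h1
        nlinarith
    · have hk2 : 2 ≤ k := by have := hbd i; omega
      set m1 : Fin d → ℤ := fun i => (z i + xs i + 1) / 2 with hm1
      set m2 : Fin d → ℤ := fun i => (z i + xs i) / 2 with hm2
      have hm1box : ∀ i', 1 ≤ m1 i' ∧ m1 i' ≤ (N : ℤ) := by
        intro i'; have := hz i'; have := hxs i'; simp only [hm1]; omega
      have hm2box : ∀ i', 1 ≤ m2 i' ∧ m2 i' ≤ (N : ℤ) := by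
        intro i'; have := hz i'; have := hxs i'; simp only [hm2]; omega
      have h1b : ∀ i', (m1 i' - xs i').natAbs ≤ (k + 1) / 2 := by
        intro i'; have := hbd i'; simp only [hm1]; omega
      have h2b : ∀ i', (m2 i' - xs i').natAbs ≤ (k + 1) / 2 := by
        intro i'; have := hbd i'; simp only [hm2]; omega
      have ih1 := IH ((k + 1) / 2) (by omega) m1 hm1box h1b i
      have ih2 := IH ((k + 1) / 2) (by omega) m2 hm2box h2b i
      have hsum := hmid z xs hz hxs
      have key : (m1 i - xs i).natAbs + (m2 i - xs i).natAbs = (z i - xs i).natAbs := by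
        simp only [hm1, hm2]; omega
      have keyR : ((m1 i - xs i).natAbs : ℝ) + ((m2 i - xs i).natAbs : ℝ)
          = ((z i - xs i).natAbs : ℝ) := by exact_mod_cast congrArg (Nat.cast (R := ℝ)) key
      have : c * (((z i - xs i).natAbs : ℕ) : ℝ)
          = c * ((m1 i - xs i).natAbs : ℝ) + c * ((m2 i - xs i).natAbs : ℝ) := by
        rw [← keyR]; ring
      rw [this]
      have hfm : f m1 + f m2 ≤ f z + f xs := hsum
      linarith



/-- Let `f̃` be the convex extension on `[1,N]^d` of an L♮-convex
function `f` on `{1,...,N}^d` (convex, agreeing with `f` on lattice points, and equal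
on every unit cube to a convex combination of the lattice values via the Lovász
structure). If `f` has unique minimizer `x*` with indifference zone `c > 0`, and
`f̃(x̄) − f(x*) ≤ ε` with `ε < c·N`, then `‖x̄ − x*‖_∞ ≤ ε/c`. -/
theorem iz_localization
    (d N : ℕ) (hd : 1 ≤ d) (hN : 2 ≤ N)
    (f : (Fin d → ℤ) → ℝ) (ftil : (Fin d → ℝ) → ℝ)
    (hmid : ∀ x y : Fin d → ℤ,
      (∀ i, 1 ≤ x i ∧ x i ≤ (N : ℤ)) → (∀ i, 1 ≤ y i ∧ y i ≤ (N : ℤ)) →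
      f (fun i => (x i + y i + 1) / 2) + f (fun i => (x i + y i) / 2) ≤ f x + f y)
    (hconv : ConvexOn ℝ {x : Fin d → ℝ | ∀ i, 1 ≤ x i ∧ x i ≤ (N : ℝ)} ftil)
    (hagree : ∀ z : Fin d → ℤ, (∀ i, 1 ≤ z i ∧ z i ≤ (N : ℤ)) →
      ftil (fun i => (z i : ℝ)) = f z)
    (hpiece : ∀ x : Fin d → ℝ, (∀ i, 1 ≤ x i ∧ x i ≤ (N : ℝ)) →
      ∀ z : Fin d → ℤ, (∀ i, 1 ≤ z i ∧ z i + 1 ≤ (N : ℤ)) →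
        (∀ i, (z i : ℝ) ≤ x i ∧ x i ≤ (z i : ℝ) + 1) →
        ∃ (lam : Fin (d + 1) → ℝ) (S : Fin (d + 1) → Fin d → ℤ),
          (∀ j, 0 ≤ lam j) ∧ (∑ j, lam j = 1) ∧
          (∀ j i, S j i = z i ∨ S j i = z i + 1) ∧
          (∀ i, x i = ∑ j, lam j * ((S j i : ℤ) : ℝ)) ∧
          ftil x = ∑ j, lam j * f (S j))
    (xs : Fin d → ℤ) (hxs : ∀ i, 1 ≤ xs i ∧ xs i ≤ (N : ℤ))
    (c : ℝ) (hc : 0 < c)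
    (hIZ : ∀ z : Fin d → ℤ, (∀ i, 1 ≤ z i ∧ z i ≤ (N : ℤ)) → z ≠ xs → c ≤ f z - f xs)
    (ε : ℝ) (hε : 0 ≤ ε) (hεN : ε < c * N)
    (xbar : Fin d → ℝ) (hxbar : ∀ i, 1 ≤ xbar i ∧ xbar i ≤ (N : ℝ))
    (hval : ftil xbar - f xs ≤ ε) :
    ‖xbar - (fun i => ((xs i : ℤ) : ℝ))‖ ≤ ε / c := by
  -- the cube containing xbar
  set z : Fin d → ℤ := fun i => min ⌊xbar i⌋ ((N : ℤ) - 1) with hz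
  have hzbox : ∀ i, 1 ≤ z i ∧ z i + 1 ≤ (N : ℤ) := by
    intro i
    have h1 : (1 : ℤ) ≤ ⌊xbar i⌋ := by
      rw [Int.le_floor]; exact_mod_cast (hxbar i).1
    constructor
    · simp only [hz, le_min_iff]; omega
    · simp only [hz]; omega
  have hzin : ∀ i, (z i : ℝ) ≤ xbar i ∧ xbar i ≤ (z i : ℝ) + 1 := by
    intro i
    constructor
    · calc (z i : ℝ) ≤ (⌊xbar i⌋ : ℝ) := by exact_mod_cast min_le_left _ _
        _ ≤ xbar i := Int.floor_le _
    · rcases le_or_gt ⌊xbar i⌋ ((N : ℤ) - 1) with h | h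
      · have : z i = ⌊xbar i⌋ := by simp only [hz]; omega
        rw [this]
        exact (Int.lt_floor_add_one _).le
      · have hfl : ⌊xbar i⌋ ≤ (N : ℤ) := by
          rw [Int.floor_le_iff] at *
          · push_cast; linarith [(hxbar i).2]
        have : z i = (N : ℤ) - 1 := by simp only [hz]; omega
        rw [this]
        push_cast
        linarith [(hxbar i).2]
  obtain ⟨lam, S, hlam0, hlam1, hS, hx, hval2⟩ := hpiece xbar hxbar z hzbox hzin
  have hSbox : ∀ j, ∀ i, 1 ≤ S j i ∧ S j i ≤ (N : ℤ) := by
    intro j i; rcases hS j i with h | h <;> (have := hzbox i; omega)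
  have hbd : ∀ j, ∀ i, (S j i - xs i).natAbs ≤ N := by
    intro j i; have := hSbox j i; have := hxs i; omega
  have hεc : 0 ≤ ε / c := div_nonneg hε hc.le
  rw [pi_norm_le_iff_of_nonneg hεc]
  intro i
  rw [Pi.sub_apply, Real.norm_eq_abs, le_div_iff₀ hc]
  have hA : ∀ j, c * ((S j i - xs i).natAbs : ℝ) ≤ f (S j) - f xs := fun j =>
    iz_growth d N f hmid xs hxs c hc hIZ N (S j) (hSbox j) (hbd j) i
  have e1 : xbar i - ((xs i : ℤ) : ℝ) = ∑ j, lam j * (((S j i : ℤ) : ℝ) - ((xs i : ℤ) : ℝ)) := by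
    have : ∑ j, lam j * (((S j i : ℤ) : ℝ) - ((xs i : ℤ) : ℝ))
        = (∑ j, lam j * ((S j i : ℤ) : ℝ)) - (∑ j, lam j) * ((xs i : ℤ) : ℝ) := by
      rw [Finset.sum_mul, ← Finset.sum_sub_distrib]
      congr 1 with j
      ring
    rw [this, hlam1, ← hx i]; ring
  have e2 : |xbar i - ((xs i : ℤ) : ℝ)| ≤ ∑ j, lam j * ((S j i - xs i).natAbs : ℝ) := by
    rw [e1]
    refine (Finset.abs_sum_le_sum_abs _ _).trans (Finset.sum_le_sum fun j _ => ?_)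
    rw [abs_mul, abs_of_nonneg (hlam0 j), Nat.cast_natAbs]
    push_cast
    exact le_rfl
  have e3 : c * (∑ j, lam j * ((S j i - xs i).natAbs : ℝ)) ≤ ∑ j, lam j * (f (S j) - f xs) := by
    rw [Finset.mul_sum]
    refine Finset.sum_le_sum fun j _ => ?_
    have h := mul_le_mul_of_nonneg_left (hA j) (hlam0 j)
    linarith [h]
  have e4 : ∑ j, lam j * (f (S j) - f xs) = ftil xbar - f xs := by
    have : ∑ j, lam j * (f (S j) - f xs)
        = (∑ j, lam j * f (S j)) - (∑ j, lam j) * f xs := by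
      rw [Finset.sum_mul, ← Finset.sum_sub_distrib]
      congr 1 with j
      ring
    rw [this, hlam1, ← hval2]; ring
  have h5 := mul_le_mul_of_nonneg_left e2 hc.le
  linarith [h5, e3, e4, hval]
end

section
/- Let f̃ : [1,N]^d → ℝ be convex, agreeing on lattice points with a function f : {1,...,N}^d → ℝ that has unique minimizer x* and indifference zone c > 0 (i.e., f(x) − f(x*) ≥ c for all lattice x ≠ x*). Suppose for every x ∈ [1,N]^d with ‖x − x*‖_∞ ≤ 1, f̃(x) is a convex combination Σ_{i=0}^d λ_i f(S^i) of values of f at lattice points S^0,...,S^d all lying in a common unit cube containing x and x*, with x = Σ_i λ_i S^i. Then for all such x, ‖x − x*‖_∞ ≤ c^{-1}·(f̃(x) − f(x*)). -/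
/-- (Local step of the weak sharp minimum property.) Let `f̃` be convex
on `[1,N]^d`, agreeing on lattice points with `f : {1,...,N}^d → ℝ` which has unique
minimizer `x*` and indifference zone `c > 0`. Suppose every `x` in the box with
`‖x − x*‖_∞ ≤ 1` admits a convex-combination representation `x = Σ λ_j S^j`,
`f̃(x) = Σ λ_j f(S^j)`, over lattice points `S^j` lying in a common unit cube that also
contains `x*`. Then `‖x − x*‖_∞ ≤ c⁻¹ (f̃(x) − f(x*))` for all such `x`. -/
theorem wsm_local_step
    (d N : ℕ) (f : (Fin d → ℤ) → ℝ) (ftil : (Fin d → ℝ) → ℝ)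
    (hconv : ConvexOn ℝ {x : Fin d → ℝ | ∀ i, 1 ≤ x i ∧ x i ≤ (N : ℝ)} ftil)
    (hagree : ∀ z : Fin d → ℤ, (∀ i, 1 ≤ z i ∧ z i ≤ (N : ℤ)) →
      ftil (fun i => (z i : ℝ)) = f z)
    (xs : Fin d → ℤ) (hxs : ∀ i, 1 ≤ xs i ∧ xs i ≤ (N : ℤ))
    (c : ℝ) (hc : 0 < c)
    (hIZ : ∀ z : Fin d → ℤ, (∀ i, 1 ≤ z i ∧ z i ≤ (N : ℤ)) → z ≠ xs → c ≤ f z - f xs)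
    (hdecomp : ∀ x : Fin d → ℝ, (∀ i, 1 ≤ x i ∧ x i ≤ (N : ℝ)) →
      ‖x - (fun i => ((xs i : ℤ) : ℝ))‖ ≤ 1 →
      ∃ (lam : Fin (d + 1) → ℝ) (S : Fin (d + 1) → Fin d → ℤ),
        (∀ j, 0 ≤ lam j) ∧ (∑ j, lam j = 1) ∧
        (∀ j i, 1 ≤ S j i ∧ S j i ≤ (N : ℤ)) ∧
        (∃ z : Fin d → ℤ,
          (∀ j i, S j i = z i ∨ S j i = z i + 1) ∧ (∀ i, xs i = z i ∨ xs i = z i + 1)) ∧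
        (∀ i, x i = ∑ j, lam j * ((S j i : ℤ) : ℝ)) ∧
        ftil x = ∑ j, lam j * f (S j)) :
    ∀ x : Fin d → ℝ, (∀ i, 1 ≤ x i ∧ x i ≤ (N : ℝ)) →
      ‖x - (fun i => ((xs i : ℤ) : ℝ))‖ ≤ 1 →
      ‖x - (fun i => ((xs i : ℤ) : ℝ))‖ ≤ c⁻¹ * (ftil x - f xs) := by
  intro x hx hnear
  obtain ⟨lam, S, hlam0, hlam1, hSbox, ⟨z, hSz, hxsz⟩, hxrep, hfrep⟩ := hdecomp x hx hnear
  classical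
  set T : Finset (Fin (d+1)) := Finset.univ.filter (fun j => S j ≠ xs) with hT
  set A : ℝ := ∑ j ∈ T, lam j with hAdef
  have hA0 : 0 ≤ A := Finset.sum_nonneg fun j _ => hlam0 j
  -- coordinatewise bound
  have hbound : ∀ i, |x i - (xs i : ℝ)| ≤ A := by
    intro i
    have hrep : x i - (xs i : ℝ) = ∑ j, lam j * ((S j i : ℝ) - (xs i : ℝ)) := by
      simp only [mul_sub, Finset.sum_sub_distrib, ← Finset.sum_mul, hlam1, one_mul,
        hxrep i]
    rw [hrep]
    calc |∑ j, lam j * ((S j i : ℝ) - (xs i : ℝ))|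
        ≤ ∑ j, |lam j * ((S j i : ℝ) - (xs i : ℝ))| := Finset.abs_sum_le_sum_abs _ _
      _ = ∑ j ∈ T, |lam j * ((S j i : ℝ) - (xs i : ℝ))| := by
          refine (Finset.sum_subset (Finset.subset_univ T) ?_).symm
          intro j _ hj
          have : S j = xs := by
            by_contra h
            exact hj (Finset.mem_filter.mpr ⟨Finset.mem_univ j, h⟩)
          simp [this]
      _ ≤ ∑ j ∈ T, lam j := by
          refine Finset.sum_le_sum fun j _ => ?_
          rw [abs_mul, abs_of_nonneg (hlam0 j)]
          have h1 : |((S j i - xs i : ℤ) : ℝ)| ≤ 1 := by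
            rw [← Int.cast_one, ← Int.cast_abs, Int.cast_le, abs_le]
            rcases hSz j i with h | h <;> rcases hxsz i with h' | h' <;> omega
          push_cast at h1
          calc lam j * |(S j i : ℝ) - (xs i : ℝ)| ≤ lam j * 1 :=
                mul_le_mul_of_nonneg_left h1 (hlam0 j)
            _ = lam j := mul_one _
  have hnorm : ‖x - (fun i => ((xs i : ℤ) : ℝ))‖ ≤ A := by
    rw [pi_norm_le_iff_of_nonneg hA0]
    intro i
    simpa [Real.norm_eq_abs] using hbound i
  have hval : c * A ≤ ftil x - f xs := by
    have h1 : ftil x - f xs = ∑ j, lam j * (f (S j) - f xs) := by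
      simp only [mul_sub, Finset.sum_sub_distrib, ← Finset.sum_mul, hlam1, one_mul,
        hfrep]
    rw [h1]
    have h2 : (∑ j ∈ T, lam j * (f (S j) - f xs)) = ∑ j, lam j * (f (S j) - f xs) := by
      refine Finset.sum_subset (Finset.subset_univ T) ?_
      intro j _ hj
      have : S j = xs := by
        by_contra h
        exact hj (Finset.mem_filter.mpr ⟨Finset.mem_univ j, h⟩)
      simp [this]
    rw [← h2, hAdef, Finset.mul_sum]
    refine Finset.sum_le_sum fun j hj => ?_
    have hne : S j ≠ xs := (Finset.mem_filter.mp hj).2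
    have := hIZ (S j) (hSbox j) hne
    rw [mul_comm c (lam j)]
    exact mul_le_mul_of_nonneg_left this (hlam0 j)
  refine hnorm.trans ?_
  rw [le_inv_mul_iff₀ hc]
  exact hval
end
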